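/- For any policy π and any two transition kernels P_s, P_t on a finite MDP with rewards bounded in absolute value by R_max, |J^π_{P_t} − J^π_{P_s}| ≤ (2 R_max/(1−γ)) · D_TV(ν^π_{P_s}, ν^π_{P_t}), where ν^π_P is the discounted transition (state-action-next-state) visitation distribution. In particular J^π_{P_t} ≥ J^π_{P_s} − (2 R_max/(1−γ)) · D_TV(ν^π_{P_s}, ν^π_{P_t}). -/

import Mathlib

open scoped BigOperators

section MDP

variable {S A : Type*} [Fintype S] [Fintype A] [DecidableEq S]

/-- One-step state distribution update under kernel `P` and policy `π`. -/
noncomputable def stepDist (P : S → A → S → ℝ) (π : S → A → ℝ) (ρ : S → ℝ) : S → ℝ :=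
  fun s => ∑ s' : S, ∑ a : A, ρ s' * π s' a * P s' a s

/-- Distribution of the state at time `t`. -/
noncomputable def stateDist (P : S → A → S → ℝ) (π : S → A → ℝ) (ρ₀ : S → ℝ) : ℕ → S → ℝ
  | 0 => ρ₀
  | t + 1 => stepDist P π (stateDist P π ρ₀ t)

/-- Discounted state visitation distribution `d^π_P`. -/
noncomputable def visitS (γ : ℝ) (P : S → A → S → ℝ) (π : S → A → ℝ) (ρ₀ : S → ℝ) : S → ℝ :=
  fun s => (1 - γ) * ∑' t : ℕ, γ ^ t * stateDist P π ρ₀ t s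

/-- Discounted state-action visitation distribution `μ^π_P`. -/
noncomputable def visitSA (γ : ℝ) (P : S → A → S → ℝ) (π : S → A → ℝ) (ρ₀ : S → ℝ) :
    S × A → ℝ :=
  fun x => (1 - γ) * ∑' t : ℕ, γ ^ t * stateDist P π ρ₀ t x.1 * π x.1 x.2

/-- Discounted transition (state-action-next-state) visitation distribution `ν^π_P`. -/
noncomputable def visitT (γ : ℝ) (P : S → A → S → ℝ) (π : S → A → ℝ) (ρ₀ : S → ℝ) :
    S × A × S → ℝ :=
  fun x => (1 - γ) * ∑' t : ℕ, γ ^ t * stateDist P π ρ₀ t x.1 * π x.1 x.2.1 * P x.1 x.2.1 x.2.2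

/-- Expected discounted return starting from initial distribution `ρ₀`. -/
noncomputable def ret (γ : ℝ) (r : S → A → S → ℝ) (P : S → A → S → ℝ) (π : S → A → ℝ)
    (ρ₀ : S → ℝ) : ℝ :=
  ∑' t : ℕ, γ ^ t *
    ∑ s : S, ∑ a : A, ∑ s' : S, stateDist P π ρ₀ t s * π s a * P s a s' * r s a s'

/-- Value function `V^π_P`. -/
noncomputable def valueFn (γ : ℝ) (r : S → A → S → ℝ) (P : S → A → S → ℝ) (π : S → A → ℝ) :
    S → ℝ :=
  fun s => ret γ r P π (fun s'' => if s'' = s then 1 else 0)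

/-- Expected discounted return `J^π_P = E_{ρ₀}[V^π_P]`. -/
noncomputable def expRet (γ : ℝ) (r : S → A → S → ℝ) (P : S → A → S → ℝ) (π : S → A → ℝ)
    (ρ₀ : S → ℝ) : ℝ :=
  ∑ s : S, ρ₀ s * valueFn γ r P π s

/-- Total variation distance `(1/2) ∑ |p - q|`. -/
noncomputable def tvDist {X : Type*} [Fintype X] (p q : X → ℝ) : ℝ :=
  (1 / 2) * ∑ x : X, |p x - q x|

/-- Kullback–Leibler divergence on a finite set. -/
noncomputable def klDiv' {X : Type*} [Fintype X] (p q : X → ℝ) : ℝ :=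
  ∑ x : X, p x * Real.log (p x / q x)

/-- Jensen–Shannon divergence on a finite set. -/
noncomputable def jsDiv {X : Type*} [Fintype X] (p q : X → ℝ) : ℝ :=
  (1 / 2) * klDiv' p (fun x => (p x + q x) / 2) +
    (1 / 2) * klDiv' q (fun x => (p x + q x) / 2)

/-- `π` is a stochastic policy. -/
def IsStochPol (π : S → A → ℝ) : Prop :=
  ∀ s, (∀ a, 0 ≤ π s a) ∧ ∑ a : A, π s a = 1

/-- `P` is a stochastic transition kernel. -/
def IsStochKer (P : S → A → S → ℝ) : Prop :=
  ∀ s a, (∀ s', 0 ≤ P s a s') ∧ ∑ s' : S, P s a s' = 1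

/-- `p` is a probability mass function. -/
def IsProb {X : Type*} [Fintype X] (p : X → ℝ) : Prop :=
  (∀ x, 0 ≤ p x) ∧ ∑ x : X, p x = 1

end MDP

section Helpers

variable {S A : Type*} [Fintype S] [Fintype A] [DecidableEq S]

lemma stepDist_prob (P : S → A → S → ℝ) (π : S → A → ℝ) (ρ : S → ℝ)
    (hπ : IsStochPol π) (hP : IsStochKer P) (hρ : IsProb ρ) :
    IsProb (stepDist P π ρ) := by
  constructor
  · intro s
    apply Finset.sum_nonneg; intro s' _
    apply Finset.sum_nonneg; intro a _
    exact mul_nonneg (mul_nonneg (hρ.1 s') ((hπ s').1 a)) ((hP s' a).1 s)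
  · unfold stepDist
    rw [Finset.sum_comm]
    have h1 : ∀ s' : S, ∑ s : S, ∑ a : A, ρ s' * π s' a * P s' a s = ρ s' := by
      intro s'
      rw [Finset.sum_comm]
      have : ∀ a : A, ∑ s : S, ρ s' * π s' a * P s' a s = ρ s' * π s' a := by
        intro a
        rw [← Finset.mul_sum, (hP s' a).2, mul_one]
      simp_rw [this, ← Finset.mul_sum, (hπ s').2, mul_one]
    simp_rw [h1, hρ.2]

lemma stateDist_prob (P : S → A → S → ℝ) (π : S → A → ℝ) (ρ₀ : S → ℝ)
    (hπ : IsStochPol π) (hP : IsStochKer P) (hρ : IsProb ρ₀) (t : ℕ) :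
    IsProb (stateDist P π ρ₀ t) := by
  induction t with
  | zero => exact hρ
  | succ t ih => exact stepDist_prob P π _ hπ hP ih

lemma stateDist_le_one (P : S → A → S → ℝ) (π : S → A → ℝ) (ρ₀ : S → ℝ)
    (hπ : IsStochPol π) (hP : IsStochKer P) (hρ : IsProb ρ₀) (t : ℕ) (s : S) :
    stateDist P π ρ₀ t s ≤ 1 := by
  have h := stateDist_prob P π ρ₀ hπ hP hρ t
  calc stateDist P π ρ₀ t s ≤ ∑ s' : S, stateDist P π ρ₀ t s' :=
        Finset.single_le_sum (fun i _ => h.1 i) (Finset.mem_univ s)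
    _ = 1 := h.2

lemma summable_geom_aux (γ : ℝ) (hγ0 : 0 ≤ γ) (hγ1 : γ < 1) (f : ℕ → ℝ) (C : ℝ)
    (hf : ∀ t, |f t| ≤ C) : Summable (fun t => γ ^ t * f t) := by
  apply Summable.of_norm_bounded (g := fun t => γ ^ t * C)
  · exact (summable_geometric_of_lt_one hγ0 hγ1).mul_right C
  · intro t
    rw [Real.norm_eq_abs, abs_mul, abs_pow, abs_of_nonneg hγ0]
    exact mul_le_mul_of_nonneg_left (hf t) (pow_nonneg hγ0 t)

lemma stateDist_lin (P : S → A → S → ℝ) (π : S → A → ℝ) (ρ₀ : S → ℝ) (t : ℕ) (s : S) :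
    stateDist P π ρ₀ t s =
      ∑ s0 : S, ρ₀ s0 * stateDist P π (fun s'' => if s'' = s0 then 1 else 0) t s := by
  induction t generalizing s with
  | zero =>
    simp only [stateDist, mul_ite, mul_one, mul_zero]
    rw [Finset.sum_ite_eq Finset.univ s ρ₀]
    simp
  | succ t ih =>
    simp only [stateDist, stepDist]
    calc ∑ s' : S, ∑ a : A, stateDist P π ρ₀ t s' * π s' a * P s' a s
        = ∑ s' : S, ∑ a : A, ∑ s0 : S,
            ρ₀ s0 * stateDist P π (fun s'' => if s'' = s0 then 1 else 0) t s' * π s' a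
              * P s' a s := by
          simp_rw [ih, Finset.sum_mul]
      _ = ∑ s' : S, ∑ s0 : S, ∑ a : A,
            ρ₀ s0 * stateDist P π (fun s'' => if s'' = s0 then 1 else 0) t s' * π s' a
              * P s' a s :=
          Finset.sum_congr rfl (fun s' _ => Finset.sum_comm)
      _ = ∑ s0 : S, ∑ s' : S, ∑ a : A,
            ρ₀ s0 * stateDist P π (fun s'' => if s'' = s0 then 1 else 0) t s' * π s' a
              * P s' a s := Finset.sum_comm
      _ = ∑ s0 : S, ρ₀ s0 * ∑ s' : S, ∑ a : A,
            stateDist P π (fun s'' => if s'' = s0 then 1 else 0) t s' * π s' a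
              * P s' a s := by
          simp_rw [Finset.mul_sum, mul_assoc]


/-- shorthand for the per-transition weight `π * P * r`. -/
noncomputable def trip {S A : Type*} (r P : S → A → S → ℝ) (π : S → A → ℝ)
    (x : S × A × S) : ℝ :=
  π x.1 x.2.1 * P x.1 x.2.1 x.2.2 * r x.1 x.2.1 x.2.2

lemma ret_expand (γ : ℝ) (r P : S → A → S → ℝ) (π : S → A → ℝ) (ρ : S → ℝ) :
    ret γ r P π ρ =
      ∑' t : ℕ, γ ^ t * ∑ x : S × A × S, stateDist P π ρ t x.1 * trip r P π x := by
  unfold ret trip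
  congr 1; funext t; congr 1
  rw [Fintype.sum_prod_type]
  apply Finset.sum_congr rfl; intro s _
  rw [Fintype.sum_prod_type]
  apply Finset.sum_congr rfl; intro a _
  apply Finset.sum_congr rfl; intro s' _
  ring

lemma delta_prob (s : S) : IsProb (fun s'' => if s'' = s then 1 else 0) := by
  constructor
  · intro x; dsimp only; split <;> norm_num
  · simp

lemma summable_main (γ : ℝ) (hγ0 : 0 ≤ γ) (hγ1 : γ < 1)
    (r P : S → A → S → ℝ) (π : S → A → ℝ) (ρ : S → ℝ)
    (hπ : IsStochPol π) (hP : IsStochKer P) (hρ : IsProb ρ) (x : S × A × S) :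
    Summable (fun t : ℕ => γ ^ t * (stateDist P π ρ t x.1 * trip r P π x)) := by
  apply summable_geom_aux γ hγ0 hγ1 _ |trip r P π x|
  intro t
  rw [abs_mul]
  apply mul_le_of_le_one_left (abs_nonneg _)
  rw [abs_le]
  exact ⟨by linarith [(stateDist_prob P π ρ hπ hP hρ t).1 x.1],
    stateDist_le_one P π ρ hπ hP hρ t x.1⟩

lemma summable_G (γ : ℝ) (hγ0 : 0 ≤ γ) (hγ1 : γ < 1)
    (r P : S → A → S → ℝ) (π : S → A → ℝ) (ρ : S → ℝ)
    (hπ : IsStochPol π) (hP : IsStochKer P) (hρ : IsProb ρ) :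
    Summable (fun t : ℕ => γ ^ t * ∑ x : S × A × S, stateDist P π ρ t x.1 * trip r P π x) := by
  apply summable_geom_aux γ hγ0 hγ1 _ (∑ x : S × A × S, |trip r P π x|)
  intro t
  calc |∑ x : S × A × S, stateDist P π ρ t x.1 * trip r P π x|
      ≤ ∑ x : S × A × S, |stateDist P π ρ t x.1 * trip r P π x| :=
        Finset.abs_sum_le_sum_abs _ _
    _ ≤ ∑ x : S × A × S, |trip r P π x| := by
        apply Finset.sum_le_sum; intro x _
        rw [abs_mul]
        apply mul_le_of_le_one_left (abs_nonneg _)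
        rw [abs_le]
        exact ⟨by linarith [(stateDist_prob P π ρ hπ hP hρ t).1 x.1],
          stateDist_le_one P π ρ hπ hP hρ t x.1⟩

lemma ret_eq (γ : ℝ) (hγ0 : 0 ≤ γ) (hγ1 : γ < 1)
    (r P : S → A → S → ℝ) (π : S → A → ℝ) (ρ : S → ℝ)
    (hπ : IsStochPol π) (hP : IsStochKer P) (hρ : IsProb ρ) :
    ret γ r P π ρ =
      (1 - γ)⁻¹ * ∑ x : S × A × S, visitT γ P π ρ x * r x.1 x.2.1 x.2.2 := by
  rw [ret_expand]
  have hret : (∑' t : ℕ, γ ^ t * ∑ x : S × A × S, stateDist P π ρ t x.1 * trip r P π x)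
      = ∑ x : S × A × S, ∑' t : ℕ, γ ^ t * (stateDist P π ρ t x.1 * trip r P π x) := by
    simp_rw [Finset.mul_sum]
    exact Summable.tsum_finsetSum (fun x _ => summable_main γ hγ0 hγ1 r P π ρ hπ hP hρ x)
  rw [hret]
  have h3 : ∀ x : S × A × S, visitT γ P π ρ x * r x.1 x.2.1 x.2.2
      = (1 - γ) * ∑' t : ℕ, γ ^ t * (stateDist P π ρ t x.1 * trip r P π x) := by
    intro x
    unfold visitT trip
    rw [show (fun t : ℕ => γ ^ t * stateDist P π ρ t x.1 * π x.1 x.2.1 * P x.1 x.2.1 x.2.2)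
        = fun t : ℕ => (γ ^ t * stateDist P π ρ t x.1) * (π x.1 x.2.1 * P x.1 x.2.1 x.2.2)
        from funext fun t => by ring, tsum_mul_right]
    rw [show (fun t : ℕ => γ ^ t * (stateDist P π ρ t x.1 *
          (π x.1 x.2.1 * P x.1 x.2.1 x.2.2 * r x.1 x.2.1 x.2.2)))
        = fun t : ℕ => (γ ^ t * stateDist P π ρ t x.1) *
          (π x.1 x.2.1 * P x.1 x.2.1 x.2.2 * r x.1 x.2.1 x.2.2)
        from funext fun t => by ring, tsum_mul_right]
    ring
  simp_rw [h3, ← Finset.mul_sum]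
  rw [← mul_assoc, inv_mul_cancel₀ (by linarith : (1:ℝ) - γ ≠ 0), one_mul]

lemma expRet_eq_ret (γ : ℝ) (hγ0 : 0 ≤ γ) (hγ1 : γ < 1)
    (r P : S → A → S → ℝ) (π : S → A → ℝ) (ρ₀ : S → ℝ)
    (hπ : IsStochPol π) (hP : IsStochKer P) (hρ : IsProb ρ₀) :
    expRet γ r P π ρ₀ = ret γ r P π ρ₀ := by
  unfold expRet valueFn
  simp_rw [ret_expand]
  have hGlin : ∀ t : ℕ,
      ∑ x : S × A × S, stateDist P π ρ₀ t x.1 * trip r P π x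
        = ∑ s0 : S, ρ₀ s0 * ∑ x : S × A × S,
            stateDist P π (fun s'' => if s'' = s0 then 1 else 0) t x.1 * trip r P π x := by
    intro t
    simp_rw [stateDist_lin P π ρ₀ t, Finset.sum_mul, Finset.mul_sum, mul_assoc]
    exact Finset.sum_comm
  have key : (∑' t : ℕ, γ ^ t * ∑ x : S × A × S, stateDist P π ρ₀ t x.1 * trip r P π x)
      = ∑' t : ℕ, ∑ s0 : S, ρ₀ s0 * (γ ^ t * ∑ x : S × A × S,
          stateDist P π (fun s'' => if s'' = s0 then 1 else 0) t x.1 * trip r P π x) := by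
    congr 1; funext t
    rw [hGlin t, Finset.mul_sum]
    apply Finset.sum_congr rfl; intro s0 _; ring
  rw [key, Summable.tsum_finsetSum]
  · apply Finset.sum_congr rfl; intro s0 _
    rw [tsum_mul_left]
  · intro s0 _
    exact (summable_G γ hγ0 hγ1 r P π _ hπ hP (delta_prob s0)).mul_left (ρ₀ s0)

end Helpers


theorem stmt1 {S A : Type*} [Fintype S] [Fintype A] [DecidableEq S]
    (γ : ℝ) (hγ0 : 0 ≤ γ) (hγ1 : γ < 1)
    (r Ps Pt : S → A → S → ℝ) (π : S → A → ℝ) (ρ₀ : S → ℝ)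
    (hπ : IsStochPol π) (hPs : IsStochKer Ps) (hPt : IsStochKer Pt) (hρ : IsProb ρ₀)
    (Rmax : ℝ) (hr : ∀ s a s', |r s a s'| ≤ Rmax) :
    |expRet γ r Pt π ρ₀ - expRet γ r Ps π ρ₀| ≤
        (2 * Rmax / (1 - γ)) * tvDist (visitT γ Ps π ρ₀) (visitT γ Pt π ρ₀) ∧
      expRet γ r Pt π ρ₀ ≥
        expRet γ r Ps π ρ₀ -
          (2 * Rmax / (1 - γ)) * tvDist (visitT γ Ps π ρ₀) (visitT γ Pt π ρ₀) := by
  have h1γ : (0:ℝ) < 1 - γ := by linarith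
  have hdiff : expRet γ r Pt π ρ₀ - expRet γ r Ps π ρ₀
      = (1 - γ)⁻¹ * ∑ x : S × A × S,
          (visitT γ Pt π ρ₀ x - visitT γ Ps π ρ₀ x) * r x.1 x.2.1 x.2.2 := by
    rw [expRet_eq_ret γ hγ0 hγ1 r Pt π ρ₀ hπ hPt hρ,
      expRet_eq_ret γ hγ0 hγ1 r Ps π ρ₀ hπ hPs hρ,
      ret_eq γ hγ0 hγ1 r Pt π ρ₀ hπ hPt hρ,
      ret_eq γ hγ0 hγ1 r Ps π ρ₀ hπ hPs hρ,
      ← mul_sub, ← Finset.sum_sub_distrib]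
    simp_rw [← sub_mul]
  have hsum : ∑ x : S × A × S, |visitT γ Pt π ρ₀ x - visitT γ Ps π ρ₀ x|
      = 2 * tvDist (visitT γ Ps π ρ₀) (visitT γ Pt π ρ₀) := by
    unfold tvDist
    simp_rw [abs_sub_comm (visitT γ Pt π ρ₀ _)]
    ring
  have hmain : |expRet γ r Pt π ρ₀ - expRet γ r Ps π ρ₀| ≤
      (2 * Rmax / (1 - γ)) * tvDist (visitT γ Ps π ρ₀) (visitT γ Pt π ρ₀) := by
    rw [hdiff, abs_mul, abs_of_nonneg (le_of_lt (inv_pos.mpr h1γ))]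
    calc (1 - γ)⁻¹ * |∑ x : S × A × S,
            (visitT γ Pt π ρ₀ x - visitT γ Ps π ρ₀ x) * r x.1 x.2.1 x.2.2|
        ≤ (1 - γ)⁻¹ * ∑ x : S × A × S,
            |visitT γ Pt π ρ₀ x - visitT γ Ps π ρ₀ x| * Rmax := by
          apply mul_le_mul_of_nonneg_left _ (le_of_lt (inv_pos.mpr h1γ))
          refine le_trans (Finset.abs_sum_le_sum_abs _ _) ?_
          apply Finset.sum_le_sum; intro x _
          rw [abs_mul]
          exact mul_le_mul_of_nonneg_left (hr _ _ _) (abs_nonneg _)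
      _ = (2 * Rmax / (1 - γ)) * tvDist (visitT γ Ps π ρ₀) (visitT γ Pt π ρ₀) := by
          rw [← Finset.sum_mul, hsum]
          field_simp
  refine ⟨hmain, ?_⟩
  have := neg_le_of_abs_le hmain
  linarith
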